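/- Let (Ω, F, P) be a probability space and C : Ω → (real d×d symmetric matrices) a measurable random matrix. Let 1 ≤ s ≤ d, R ≥ 0 and p ≥ 0 be such that for every vector u ∈ ℝᵈ with at most s nonzero entries and ‖u‖₂ ≤ 1, P(|uᵀCu| ≥ R) ≤ p. Then P( sup_{u ∈ K(s), ‖u‖₂ ≤ 1} |uᵀCu| ≥ 3R ) ≤ 21^s · min(d^s, (e·d/s)^s) · p, where K(s) = {u ∈ ℝᵈ : u has at most s nonzero entries}. -/

import Mathlib

open Matrix MeasureTheory
open Metric ENNReal

lemma packing_card_le (n : ℕ) (T : Finset (EuclideanSpace ℝ (Fin n)))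
    (hT : ∀ x ∈ T, ‖x‖ ≤ 1)
    (hsep : ∀ x ∈ T, ∀ y ∈ T, x ≠ y → 1/3 < dist x y) :
    T.card ≤ 7 ^ n := by
  classical
  set μ : Measure (EuclideanSpace ℝ (Fin n)) := volume
  have hdisj : (T : Set (EuclideanSpace ℝ (Fin n))).PairwiseDisjoint
      (fun x => ball x (1/6)) := by
    intro x hx y hy hxy
    apply ball_disjoint_ball
    have := hsep x hx y hy hxy
    linarith
  have hsub : (⋃ x ∈ T, ball x (1/6)) ⊆ ball (0 : EuclideanSpace ℝ (Fin n)) (7/6) := by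
    intro z hz
    simp only [Set.mem_iUnion] at hz
    obtain ⟨x, hx, hz⟩ := hz
    have h1 := hT x hx
    have h2 : dist z x < 1/6 := hz
    have : dist z 0 < 7/6 := by
      calc dist z 0 ≤ dist z x + dist x 0 := dist_triangle _ _ _
        _ < 1/6 + 1 := by
            have : dist x 0 ≤ 1 := by simpa using h1
            linarith
        _ = 7/6 := by norm_num
    simpa [mem_ball] using this
  have hsum : ∑ x ∈ T, μ (ball x (1/6)) ≤ μ (ball (0 : EuclideanSpace ℝ (Fin n)) (7/6)) := by
    rw [← measure_biUnion_finset hdisj (fun x _ => measurableSet_ball)]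
    exact measure_mono hsub
  have hball : ∀ x : EuclideanSpace ℝ (Fin n), μ (ball x (1/6)) =
      ENNReal.ofReal ((1/6 : ℝ) ^ n) * μ (ball 0 1) := by
    intro x
    rw [Measure.addHaar_ball_of_pos μ x (by norm_num : (0:ℝ) < 1/6)]
    simp [finrank_euclideanSpace_fin]
  have hball7 : μ (ball (0 : EuclideanSpace ℝ (Fin n)) (7/6)) =
      ENNReal.ofReal ((7/6 : ℝ) ^ n) * μ (ball 0 1) := by
    rw [Measure.addHaar_ball_of_pos μ _ (by norm_num : (0:ℝ) < 7/6)]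
    simp [finrank_euclideanSpace_fin]
  have hpos : 0 < μ (ball (0 : EuclideanSpace ℝ (Fin n)) 1) :=
    measure_ball_pos μ 0 one_pos
  have hfin : μ (ball (0 : EuclideanSpace ℝ (Fin n)) 1) < ⊤ := measure_ball_lt_top
  have hsum' : (T.card : ℝ≥0∞) * (ENNReal.ofReal ((1/6 : ℝ) ^ n) * μ (ball 0 1))
      ≤ ENNReal.ofReal ((7/6 : ℝ) ^ n) * μ (ball 0 1) := by
    calc (T.card : ℝ≥0∞) * (ENNReal.ofReal ((1/6 : ℝ) ^ n) * μ (ball 0 1))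
        = ∑ x ∈ T, μ (ball x (1/6)) := by
          rw [Finset.sum_congr rfl (fun x _ => hball x)]
          simp [Finset.sum_const, mul_comm]
      _ ≤ _ := hsum.trans_eq hball7
  rw [← mul_assoc] at hsum'
  have hcancel : (T.card : ℝ≥0∞) * ENNReal.ofReal ((1/6 : ℝ) ^ n)
      ≤ ENNReal.ofReal ((7/6 : ℝ) ^ n) :=
    (ENNReal.mul_le_mul_iff_left hpos.ne' hfin.ne).mp hsum'
  have hsplit : ENNReal.ofReal ((7/6 : ℝ) ^ n)
      = ((7 ^ n : ℕ) : ℝ≥0∞) * ENNReal.ofReal ((1/6 : ℝ) ^ n) := by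
    rw [← ENNReal.ofReal_natCast, ← ENNReal.ofReal_mul (by positivity)]
    congr 1
    push_cast
    rw [← mul_pow]
    norm_num
  rw [hsplit] at hcancel
  have h0 : ENNReal.ofReal ((1/6 : ℝ) ^ n) ≠ 0 := by
    simp [ENNReal.ofReal_eq_zero, not_le]
  have h0' : ENNReal.ofReal ((1/6 : ℝ) ^ n) ≠ ⊤ := ENNReal.ofReal_ne_top
  have := (ENNReal.mul_le_mul_iff_left h0 h0').mp hcancel
  exact_mod_cast this

lemma exists_net (n : ℕ) : ∃ N : Finset (EuclideanSpace ℝ (Fin n)),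
    N.card ≤ 7 ^ n ∧ (∀ y ∈ N, ‖y‖ ≤ 1) ∧
    ∀ x : EuclideanSpace ℝ (Fin n), ‖x‖ ≤ 1 → ∃ y ∈ N, dist x y ≤ 1/3 := by
  classical
  set 𝒞 : Set (Finset (EuclideanSpace ℝ (Fin n))) :=
    {T | (∀ x ∈ T, ‖x‖ ≤ 1) ∧ ∀ x ∈ T, ∀ y ∈ T, x ≠ y → 1/3 < dist x y} with h𝒞
  have hcard : ∀ T ∈ 𝒞, T.card ≤ 7 ^ n := fun T hT => packing_card_le n T hT.1 hT.2
  set K : Set ℕ := Finset.card '' 𝒞 with hK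
  have hKne : K.Nonempty := ⟨0, ⟨∅, ⟨by simp, by simp⟩, rfl⟩⟩
  have hKbdd : BddAbove K := ⟨7 ^ n, by rintro k ⟨T, hT, rfl⟩; exact hcard T hT⟩
  obtain ⟨T, hT𝒞, hTcard⟩ := Nat.sSup_mem hKne hKbdd
  refine ⟨T, hcard T hT𝒞, hT𝒞.1, ?_⟩
  intro x hx
  by_contra h
  push_neg at h
  have hxT : x ∉ T := fun hxT => by
    have := h x hxT; simp at this; linarith
  have hins : insert x T ∈ 𝒞 := by
    constructor
    · intro a ha
      rcases Finset.mem_insert.mp ha with rfl | ha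
      · exact hx
      · exact hT𝒞.1 a ha
    · intro a ha b hb hab
      rcases Finset.mem_insert.mp ha with ha' | ha' <;>
        rcases Finset.mem_insert.mp hb with hb' | hb'
      · exact absurd (ha'.trans hb'.symm) hab
      · rw [ha']; exact h b hb'
      · rw [hb', dist_comm]; exact h a ha'
      · exact hT𝒞.2 a ha' b hb' hab
  have : (insert x T).card ≤ sSup K := le_csSup hKbdd ⟨_, hins, rfl⟩
  rw [Finset.card_insert_of_notMem hxT, hTcard] at this
  omega

lemma sparse_net (d s : ℕ) (S : Finset (Fin d)) (hS : S.card = s) :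
    ∃ N : Finset (Fin d → ℝ), N.card ≤ 7 ^ s ∧
      (∀ v ∈ N, (∀ j, v j ≠ 0 → j ∈ S) ∧ Real.sqrt (∑ i, v i ^ 2) ≤ 1) ∧
      ∀ u : Fin d → ℝ, (∀ j, u j ≠ 0 → j ∈ S) → Real.sqrt (∑ i, u i ^ 2) ≤ 1 →
        ∃ v ∈ N, Real.sqrt (∑ i, (u i - v i) ^ 2) ≤ 1/3 := by
  classical
  obtain ⟨N0, hcard, hballN, hcov⟩ := exists_net s
  set e := S.orderIsoOfFin hS with he
  set ext : (Fin s → ℝ) → (Fin d → ℝ) :=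
    fun x i => if h : i ∈ S then x (e.symm ⟨i, h⟩) else 0 with hext
  have hsum : ∀ x : Fin s → ℝ, ∑ i, (ext x i) ^ 2 = ∑ j, (x j) ^ 2 := by
    intro x
    rw [← Finset.sum_subset (Finset.subset_univ S) (by
      intro i _ hiS; simp [hext, hiS])]
    rw [← Finset.sum_attach S (fun i => (ext x i) ^ 2), ← Finset.univ_eq_attach]
    rw [← Equiv.sum_comp e.toEquiv (fun i => (ext x (i : Fin d)) ^ 2)]
    apply Finset.sum_congr rfl
    intro j _
    have hmem : ((e j : {x // x ∈ S}) : Fin d) ∈ S := (e j).2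
    simp [hext]
  have hnorm : ∀ x : EuclideanSpace ℝ (Fin s), ‖x‖ = Real.sqrt (∑ j, (x j) ^ 2) := by
    intro x
    rw [EuclideanSpace.norm_eq]
    congr 1
    apply Finset.sum_congr rfl
    intro j _
    rw [Real.norm_eq_abs, sq_abs]
  set N : Finset (Fin d → ℝ) := N0.image (fun y : EuclideanSpace ℝ (Fin s) => ext y) with hN
  refine ⟨N, (Finset.card_image_le).trans hcard, ?_, ?_⟩
  · intro v hv
    obtain ⟨y, hy, rfl⟩ := Finset.mem_image.mp hv
    constructor
    · intro j hj
      by_contra hjS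
      simp [hext, hjS] at hj
    · rw [hsum, ← hnorm y]
      exact hballN y hy
  · intro u hsupp hu
    set x : EuclideanSpace ℝ (Fin s) := WithLp.toLp 2 (fun j => u (e j)) with hx
    have hux : u = ext x := by
      funext i
      by_cases hiS : i ∈ S
      · simp only [hext, dif_pos hiS, hx]
        congr 1
        simp
      · simp only [hext, dif_neg hiS]
        by_contra h
        exact hiS (hsupp i h)
    have hxnorm : ‖x‖ ≤ 1 := by
      rw [hnorm x]
      have : ∑ j, (x j) ^ 2 = ∑ i, (u i) ^ 2 := by rw [hux, hsum]
      rw [this]; exact hu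
    obtain ⟨y, hyN, hdist⟩ := hcov x hxnorm
    refine ⟨ext y, Finset.mem_image_of_mem (fun y : EuclideanSpace ℝ (Fin s) => ext y) hyN, ?_⟩
    have hsub : ∀ i, u i - ext y i = ext (fun j => x j - y j) i := by
      intro i
      by_cases hiS : i ∈ S
      · simp [hext, dif_pos hiS, hux]
      · simp [hext, dif_neg hiS, hux]
    have : ∑ i, (u i - ext y i) ^ 2 = ∑ j, (x j - y j) ^ 2 := by
      rw [Finset.sum_congr rfl (fun i _ => by rw [hsub i])]
      simpa using hsum (fun j => x j - y j)
    rw [this]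
    have hd : dist x y = Real.sqrt (∑ j, (x j - y j) ^ 2) := by
      rw [dist_eq_norm, hnorm (x - y)]
      simp only [PiLp.sub_apply]
    exact hd ▸ hdist

open Matrix in
lemma stmt12_flip {d : ℕ} (A : Matrix (Fin d) (Fin d) ℝ) (hA : A.IsSymm) (u w : Fin d → ℝ) :
    w ⬝ᵥ A *ᵥ u = u ⬝ᵥ A *ᵥ w := by
  rw [Matrix.dotProduct_mulVec u A w, ← Matrix.mulVec_transpose, hA, dotProduct_comm]

open Matrix in
lemma stmt12_expand {d : ℕ} (A : Matrix (Fin d) (Fin d) ℝ) (u w : Fin d → ℝ) :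
    (u + w) ⬝ᵥ A *ᵥ (u + w) =
      u ⬝ᵥ A *ᵥ u + u ⬝ᵥ A *ᵥ w + w ⬝ᵥ A *ᵥ u + w ⬝ᵥ A *ᵥ w := by
  simp [Matrix.mulVec_add, add_dotProduct, dotProduct_add]
  ring

open Matrix in
lemma stmt12_smul {d : ℕ} (A : Matrix (Fin d) (Fin d) ℝ) (c c' : ℝ) (u w : Fin d → ℝ) :
    (c • u) ⬝ᵥ A *ᵥ (c' • w) = c * c' * (u ⬝ᵥ A *ᵥ w) := by
  simp [Matrix.mulVec_smul, smul_dotProduct, dotProduct_smul, smul_eq_mul]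
  ring

lemma stmt12_sumsq_smul {d : ℕ} (c : ℝ) (z : Fin d → ℝ) :
    ∑ i, (c • z) i ^ 2 = c ^ 2 * ∑ i, z i ^ 2 := by
  rw [Finset.mul_sum]
  refine Finset.sum_congr rfl fun i _ => ?_
  simp [Pi.smul_apply, smul_eq_mul]
  ring

open Matrix in
lemma stmt12_quad_le {d : ℕ} (A : Matrix (Fin d) (Fin d) ℝ) (S : Finset (Fin d)) (M : ℝ)
    (hM : 0 ≤ M)
    (hQ : ∀ z : Fin d → ℝ, (∀ j, z j ≠ 0 → j ∈ S) → Real.sqrt (∑ i, z i ^ 2) ≤ 1 →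
      |z ⬝ᵥ A *ᵥ z| ≤ M)
    (z : Fin d → ℝ) (hz : ∀ j, z j ≠ 0 → j ∈ S) :
    |z ⬝ᵥ A *ᵥ z| ≤ M * (∑ i, z i ^ 2) := by
  have hnn : (0:ℝ) ≤ ∑ i, z i ^ 2 := Finset.sum_nonneg fun i _ => sq_nonneg _
  rcases eq_or_lt_of_le hnn with h0 | hpos
  · have hz0 : z = 0 := by
      funext i
      have := (Finset.sum_eq_zero_iff_of_nonneg (fun i _ => sq_nonneg (z i))).mp h0.symm
        i (Finset.mem_univ i)
      exact pow_eq_zero_iff (n := 2) (by norm_num) |>.mp this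
    rw [hz0]
    simp
  · set r := Real.sqrt (∑ i, z i ^ 2) with hr
    have hrpos : 0 < r := Real.sqrt_pos.mpr hpos
    have hrsq : r ^ 2 = ∑ i, z i ^ 2 := by rw [hr, Real.sq_sqrt hnn]
    have hzz : z = r • (r⁻¹ • z) := by
      rw [smul_smul, mul_inv_cancel₀ hrpos.ne', one_smul]
    have hadm : ∀ j, (r⁻¹ • z) j ≠ 0 → j ∈ S := by
      intro j hj
      apply hz j
      intro h0
      apply hj
      simp [Pi.smul_apply, h0]
    have hnorm1 : Real.sqrt (∑ i, (r⁻¹ • z) i ^ 2) ≤ 1 := by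
      rw [stmt12_sumsq_smul, Real.sqrt_mul (sq_nonneg _), Real.sqrt_sq_eq_abs,
        abs_of_pos (inv_pos.mpr hrpos), ← hr]
      rw [inv_mul_cancel₀ hrpos.ne']
    calc |z ⬝ᵥ A *ᵥ z| = |(r • (r⁻¹ • z)) ⬝ᵥ A *ᵥ (r • (r⁻¹ • z))| := by rw [← hzz]
      _ = r ^ 2 * |(r⁻¹ • z) ⬝ᵥ A *ᵥ (r⁻¹ • z)| := by
          rw [stmt12_smul, abs_mul, abs_of_pos (by positivity : (0:ℝ) < r * r)]
          ring
      _ ≤ r ^ 2 * M := by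
          have := hQ _ hadm hnorm1
          nlinarith [sq_nonneg r]
      _ = M * (∑ i, z i ^ 2) := by rw [hrsq]; ring

open Matrix in
lemma stmt12_expand_sub {d : ℕ} (A : Matrix (Fin d) (Fin d) ℝ) (u w : Fin d → ℝ) :
    (u - w) ⬝ᵥ A *ᵥ (u - w) =
      u ⬝ᵥ A *ᵥ u - u ⬝ᵥ A *ᵥ w - w ⬝ᵥ A *ᵥ u + w ⬝ᵥ A *ᵥ w := by
  simp [Matrix.mulVec_sub, sub_dotProduct, dotProduct_sub]
  ring

open Matrix in
lemma stmt12_bilin_le {d : ℕ} (A : Matrix (Fin d) (Fin d) ℝ) (hA : A.IsSymm)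
    (S : Finset (Fin d)) (M : ℝ) (hM : 0 ≤ M)
    (hQ : ∀ z : Fin d → ℝ, (∀ j, z j ≠ 0 → j ∈ S) → Real.sqrt (∑ i, z i ^ 2) ≤ 1 →
      |z ⬝ᵥ A *ᵥ z| ≤ M)
    (z w : Fin d → ℝ) (hz : ∀ j, z j ≠ 0 → j ∈ S) (hw : ∀ j, w j ≠ 0 → j ∈ S) :
    |z ⬝ᵥ A *ᵥ w| ≤ M * Real.sqrt (∑ i, z i ^ 2) * Real.sqrt (∑ i, w i ^ 2) := by
  have hnnz : (0:ℝ) ≤ ∑ i, z i ^ 2 := Finset.sum_nonneg fun i _ => sq_nonneg _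
  have hnnw : (0:ℝ) ≤ ∑ i, w i ^ 2 := Finset.sum_nonneg fun i _ => sq_nonneg _
  rcases eq_or_lt_of_le hnnz with h0 | hposz
  · have : z = 0 := by
      funext i
      have := (Finset.sum_eq_zero_iff_of_nonneg (fun i _ => sq_nonneg (z i))).mp h0.symm
        i (Finset.mem_univ i)
      exact pow_eq_zero_iff (n := 2) (by norm_num) |>.mp this
    rw [this]
    simp [Real.sqrt_nonneg, mul_nonneg hM (Real.sqrt_nonneg _)]
  rcases eq_or_lt_of_le hnnw with h0 | hposw
  · have : w = 0 := by
      funext i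
      have := (Finset.sum_eq_zero_iff_of_nonneg (fun i _ => sq_nonneg (w i))).mp h0.symm
        i (Finset.mem_univ i)
      exact pow_eq_zero_iff (n := 2) (by norm_num) |>.mp this
    rw [this]
    simp
  set rz := Real.sqrt (∑ i, z i ^ 2) with hrz
  set rw' := Real.sqrt (∑ i, w i ^ 2) with hrw
  have hrzpos : 0 < rz := Real.sqrt_pos.mpr hposz
  have hrwpos : 0 < rw' := Real.sqrt_pos.mpr hposw
  have hrzsq : rz ^ 2 = ∑ i, z i ^ 2 := by rw [hrz, Real.sq_sqrt hnnz]
  have hrwsq : rw' ^ 2 = ∑ i, w i ^ 2 := by rw [hrw, Real.sq_sqrt hnnw]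
  set z' := rz⁻¹ • z with hz'
  set w' := rw'⁻¹ • w with hw'
  have hz'sum : ∑ i, z' i ^ 2 = 1 := by
    rw [hz', stmt12_sumsq_smul, ← hrzsq]
    field_simp
  have hw'sum : ∑ i, w' i ^ 2 = 1 := by
    rw [hw', stmt12_sumsq_smul, ← hrwsq]
    field_simp
  have hz'S : ∀ j, z' j ≠ 0 → j ∈ S := by
    intro j hj
    refine hz j fun h0 => hj ?_
    simp [hz', Pi.smul_apply, h0]
  have hw'S : ∀ j, w' j ≠ 0 → j ∈ S := by
    intro j hj
    refine hw j fun h0 => hj ?_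
    simp [hw', Pi.smul_apply, h0]
  have haddS : ∀ j, (z' + w') j ≠ 0 → j ∈ S := by
    intro j hj
    by_cases h1 : z' j = 0
    · refine hw'S j fun h2 => hj ?_
      simp [Pi.add_apply, h1, h2]
    · exact hz'S j h1
  have hsubS : ∀ j, (z' - w') j ≠ 0 → j ∈ S := by
    intro j hj
    by_cases h1 : z' j = 0
    · refine hw'S j fun h2 => hj ?_
      simp [Pi.sub_apply, h1, h2]
    · exact hz'S j h1
  have hpar : (∑ i, (z' + w') i ^ 2) + (∑ i, (z' - w') i ^ 2) = 4 := by
    rw [← Finset.sum_add_distrib]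
    have : ∀ i, (z' + w') i ^ 2 + (z' - w') i ^ 2 = 2 * z' i ^ 2 + 2 * w' i ^ 2 := by
      intro i
      simp only [Pi.add_apply, Pi.sub_apply]
      ring
    rw [Finset.sum_congr rfl fun i _ => this i, Finset.sum_add_distrib,
      ← Finset.mul_sum, ← Finset.mul_sum, hz'sum, hw'sum]
    norm_num
  have hQadd := stmt12_quad_le A S M hM hQ (z' + w') haddS
  have hQsub := stmt12_quad_le A S M hM hQ (z' - w') hsubS
  have hpol : z' ⬝ᵥ A *ᵥ w' =
      ((z' + w') ⬝ᵥ A *ᵥ (z' + w') - (z' - w') ⬝ᵥ A *ᵥ (z' - w')) / 4 := by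
    rw [stmt12_expand, stmt12_expand_sub, stmt12_flip A hA z' w']
    ring
  have hbil1 : |z' ⬝ᵥ A *ᵥ w'| ≤ M := by
    rw [hpol]
    rw [abs_div]
    have h1 : |(z' + w') ⬝ᵥ A *ᵥ (z' + w') - (z' - w') ⬝ᵥ A *ᵥ (z' - w')|
        ≤ M * (∑ i, (z' + w') i ^ 2) + M * (∑ i, (z' - w') i ^ 2) :=
      (abs_sub _ _).trans (add_le_add hQadd hQsub)
    have : M * (∑ i, (z' + w') i ^ 2) + M * (∑ i, (z' - w') i ^ 2) = 4 * M := by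
      rw [← mul_add, hpar]; ring
    rw [this] at h1
    rw [abs_of_pos (by norm_num : (0:ℝ) < 4)]
    linarith
  have hzz : z = rz • z' := by
    rw [hz', smul_smul, mul_inv_cancel₀ hrzpos.ne', one_smul]
  have hww : w = rw' • w' := by
    rw [hw', smul_smul, mul_inv_cancel₀ hrwpos.ne', one_smul]
  calc |z ⬝ᵥ A *ᵥ w| = |(rz • z') ⬝ᵥ A *ᵥ (rw' • w')| := by rw [← hzz, ← hww]
    _ = rz * rw' * |z' ⬝ᵥ A *ᵥ w'| := by
        rw [stmt12_smul, abs_mul, abs_of_pos (mul_pos hrzpos hrwpos)]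
    _ ≤ rz * rw' * M := by
        have := mul_le_mul_of_nonneg_left hbil1 (le_of_lt (mul_pos hrzpos hrwpos))
        linarith
    _ = M * rz * rw' := by ring

lemma stmt12_count (d s : ℕ) (hs : 1 ≤ s) (hsd : s ≤ d) :
    ((d.choose s : ℝ)) * 7 ^ s ≤ 21 ^ s * min ((d : ℝ) ^ s) ((Real.exp 1 * d / s) ^ s) := by
  have hd1 : 1 ≤ d := hs.trans hsd
  have hspos : (0:ℝ) < (s : ℝ) := by exact_mod_cast hs
  have hdpos : (0:ℝ) < (d : ℝ) := by exact_mod_cast hd1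
  have hfacpos : (0:ℝ) < (Nat.factorial s : ℝ) := by exact_mod_cast s.factorial_pos
  have h1 : (d.choose s : ℝ) ≤ (d : ℝ) ^ s := by
    exact_mod_cast Nat.choose_le_pow d s
  have h2 : (d.choose s : ℝ) ≤ (Real.exp 1 * d / s) ^ s := by
    have hA : (d.choose s : ℝ) ≤ (d : ℝ) ^ s / (Nat.factorial s : ℝ) := by
      have := Nat.choose_le_pow_div (α := ℝ) s d
      simpa using this
    refine hA.trans ?_
    have hss : (s : ℝ) ^ s ≤ Real.exp 1 ^ s * (Nat.factorial s : ℝ) := by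
      have := Real.pow_div_factorial_le_exp (x := (s : ℝ)) hspos.le s
      have hexp : Real.exp (s : ℝ) = Real.exp 1 ^ s := by
        rw [← Real.exp_nat_mul, mul_one]
      rw [div_le_iff₀ hfacpos, hexp] at this
      exact this
    have hrw : (Real.exp 1 * d / s) ^ s = Real.exp 1 ^ s * (d : ℝ) ^ s / (s : ℝ) ^ s := by
      rw [div_pow, mul_pow]
    rw [hrw, div_le_div_iff₀ hfacpos (by positivity)]
    calc (d : ℝ) ^ s * (s : ℝ) ^ s ≤ (d : ℝ) ^ s * (Real.exp 1 ^ s * (Nat.factorial s : ℝ)) :=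
          mul_le_mul_of_nonneg_left hss (by positivity)
      _ = Real.exp 1 ^ s * (d : ℝ) ^ s * (Nat.factorial s : ℝ) := by ring
  have hmin : (d.choose s : ℝ) ≤ min ((d : ℝ) ^ s) ((Real.exp 1 * d / s) ^ s) :=
    le_min h1 h2
  have hminnn : (0:ℝ) ≤ min ((d : ℝ) ^ s) ((Real.exp 1 * d / s) ^ s) :=
    le_min (by positivity) (by positivity)
  calc (d.choose s : ℝ) * 7 ^ s ≤ min ((d : ℝ) ^ s) ((Real.exp 1 * d / s) ^ s) * 7 ^ s :=
        mul_le_mul_of_nonneg_right hmin (by positivity)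
    _ ≤ min ((d : ℝ) ^ s) ((Real.exp 1 * d / s) ^ s) * 21 ^ s := by
        refine mul_le_mul_of_nonneg_left ?_ hminnn
        exact pow_le_pow_left₀ (by norm_num) (by norm_num) s
    _ = 21 ^ s * min ((d : ℝ) ^ s) ((Real.exp 1 * d / s) ^ s) := by ring

lemma stmt12_tri {d : ℕ} (x y : Fin d → ℝ) :
    Real.sqrt (∑ i, (x i + y i) ^ 2) ≤
      Real.sqrt (∑ i, x i ^ 2) + Real.sqrt (∑ i, y i ^ 2) := by
  have hnorm : ∀ z : Fin d → ℝ, ‖(WithLp.toLp 2 z : EuclideanSpace ℝ (Fin d))‖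
      = Real.sqrt (∑ i, z i ^ 2) := by
    intro z
    rw [EuclideanSpace.norm_eq]
    congr 1
    exact Finset.sum_congr rfl fun i _ => by rw [Real.norm_eq_abs, sq_abs]
  have h := norm_add_le (WithLp.toLp 2 x : EuclideanSpace ℝ (Fin d))
    (WithLp.toLp 2 y : EuclideanSpace ℝ (Fin d))
  rw [hnorm x, hnorm y] at h
  refine le_trans (le_of_eq ?_) h
  rw [show (WithLp.toLp 2 x : EuclideanSpace ℝ (Fin d)) + (WithLp.toLp 2 y : EuclideanSpace ℝ (Fin d))
      = (WithLp.toLp 2 (fun i => x i + y i) : EuclideanSpace ℝ (Fin d)) from rfl, hnorm]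

open Matrix

/-- from a pointwise deviation bound over `s`-sparse unit vectors, a uniform
deviation bound over the set `K(s)` of `s`-sparse vectors in the unit ball. -/
theorem stmt_12 {Ω : Type*} [MeasurableSpace Ω] (P : Measure Ω) [IsProbabilityMeasure P]
    (d s : ℕ) (hs : 1 ≤ s) (hsd : s ≤ d)
    (C : Ω → Matrix (Fin d) (Fin d) ℝ)
    (hmeas : ∀ i j, Measurable fun ω => C ω i j)
    (hsymm : ∀ ω, (C ω).IsSymm)
    (R p : ℝ) (hR : 0 ≤ R) (hp : 0 ≤ p)
    (hyp : ∀ u : Fin d → ℝ, {j | u j ≠ 0}.ncard ≤ s →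
      Real.sqrt (∑ i, u i ^ 2) ≤ 1 →
      P {ω | R ≤ |u ⬝ᵥ (C ω) *ᵥ u|} ≤ ENNReal.ofReal p) :
    P {ω | 3 * R ≤
        ⨆ u : {u : Fin d → ℝ //
            {j | u j ≠ 0}.ncard ≤ s ∧ Real.sqrt (∑ i, u i ^ 2) ≤ 1},
          |u.1 ⬝ᵥ (C ω) *ᵥ u.1|}
      ≤ ENNReal.ofReal
          (21 ^ s * min ((d : ℝ) ^ s) ((Real.exp 1 * d / s) ^ s) * p) := by
  classical
  set ι := {u : Fin d → ℝ //
      {j | u j ≠ 0}.ncard ≤ s ∧ Real.sqrt (∑ i, u i ^ 2) ≤ 1} with hι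
  set NS : Finset (Fin d) → Finset (Fin d → ℝ) :=
    fun S => if h : S.card = s then (sparse_net d s S h).choose else ∅ with hNS
  have hNSspec : ∀ (S : Finset (Fin d)) (h : S.card = s),
      (NS S).card ≤ 7 ^ s ∧
      (∀ v ∈ NS S, (∀ j, v j ≠ 0 → j ∈ S) ∧ Real.sqrt (∑ i, v i ^ 2) ≤ 1) ∧
      ∀ u : Fin d → ℝ, (∀ j, u j ≠ 0 → j ∈ S) → Real.sqrt (∑ i, u i ^ 2) ≤ 1 →
        ∃ v ∈ NS S, Real.sqrt (∑ i, (u i - v i) ^ 2) ≤ 1/3 := by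
    intro S h
    rw [hNS]
    simp only [dif_pos h]
    exact (sparse_net d s S h).choose_spec
  set 𝒮 := Finset.powersetCard s (Finset.univ : Finset (Fin d)) with h𝒮
  set 𝒩 : Finset (Fin d → ℝ) := 𝒮.biUnion NS with h𝒩
  have h𝒩card : 𝒩.card ≤ d.choose s * 7 ^ s := by
    refine Finset.card_biUnion_le.trans ?_
    calc ∑ S ∈ 𝒮, (NS S).card ≤ ∑ _S ∈ 𝒮, 7 ^ s :=
          Finset.sum_le_sum fun S hS =>
            (hNSspec S (Finset.mem_powersetCard.mp hS).2).1
      _ = 𝒮.card * 7 ^ s := by rw [Finset.sum_const, smul_eq_mul]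
      _ = d.choose s * 7 ^ s := by
          rw [h𝒮, Finset.card_powersetCard, Finset.card_univ, Fintype.card_fin]
  have h𝒩mem : ∀ v ∈ 𝒩, {j | v j ≠ 0}.ncard ≤ s ∧ Real.sqrt (∑ i, v i ^ 2) ≤ 1 := by
    intro v hv
    obtain ⟨S, hS𝒮, hvS⟩ := Finset.mem_biUnion.mp hv
    have hScard : S.card = s := (Finset.mem_powersetCard.mp hS𝒮).2
    obtain ⟨hsupp, hnorm⟩ := (hNSspec S hScard).2.1 v hvS
    refine ⟨?_, hnorm⟩
    calc {j | v j ≠ 0}.ncard ≤ (S : Set (Fin d)).ncard :=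
          Set.ncard_le_ncard (fun j hj => hsupp j hj) (S : Set (Fin d)).toFinite
      _ = S.card := Set.ncard_coe_finset S
      _ = s := hScard
  have hkey : ∀ ω : Ω, (3 * R ≤ ⨆ u : ι, |u.1 ⬝ᵥ (C ω) *ᵥ u.1|) →
      ∃ v ∈ 𝒩, R ≤ |v ⬝ᵥ (C ω) *ᵥ v| := by
    intro ω hω
    set A := C ω with hA
    set M := ⨆ u : ι, |u.1 ⬝ᵥ A *ᵥ u.1| with hM
    have habove : ∀ u : ι, |u.1 ⬝ᵥ A *ᵥ u.1| ≤ ∑ i, ∑ j, |A i j| := by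
      intro u
      have hui : ∀ i, |u.1 i| ≤ 1 := by
        intro i
        have h1 : u.1 i ^ 2 ≤ ∑ i, u.1 i ^ 2 :=
          Finset.single_le_sum (fun j _ => sq_nonneg (u.1 j)) (Finset.mem_univ i)
        have h2 := Real.sqrt_le_sqrt h1
        rw [Real.sqrt_sq_eq_abs] at h2
        exact h2.trans u.2.2
      have hQ : u.1 ⬝ᵥ A *ᵥ u.1 = ∑ i, ∑ j, u.1 i * (A i j * u.1 j) := by
        simp [dotProduct, Matrix.mulVec, Finset.mul_sum]
      rw [hQ]
      refine (Finset.abs_sum_le_sum_abs _ _).trans (Finset.sum_le_sum fun i _ => ?_)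
      refine (Finset.abs_sum_le_sum_abs _ _).trans (Finset.sum_le_sum fun j _ => ?_)
      rw [abs_mul, abs_mul]
      have h1 : |A i j| * |u.1 j| ≤ |A i j| * 1 :=
        mul_le_mul_of_nonneg_left (hui j) (abs_nonneg _)
      have h2 : |u.1 i| * (|A i j| * |u.1 j|) ≤ 1 * (|A i j| * 1) :=
        mul_le_mul (hui i) h1 (by positivity) one_pos.le
      simpa using h2
    have hbdd : BddAbove (Set.range fun u : ι => |u.1 ⬝ᵥ A *ᵥ u.1|) := by
      refine ⟨∑ i, ∑ j, |A i j|, ?_⟩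
      rintro x ⟨u, rfl⟩
      exact habove u
    have h0adm : {j | (0 : Fin d → ℝ) j ≠ 0}.ncard ≤ s ∧
        Real.sqrt (∑ i, (0 : Fin d → ℝ) i ^ 2) ≤ 1 := by
      constructor
      · simp [Set.ncard_empty]
      · simp
    have hM0 : 0 ≤ M :=
      (abs_nonneg _).trans (le_ciSup hbdd (⟨0, h0adm⟩ : ι))
    have hδall : ∀ δ : ℝ, 0 < δ → ∃ v ∈ 𝒩, R - δ < |v ⬝ᵥ A *ᵥ v| := by
      intro δ hδ0
      have hlt : M - δ < ⨆ u : ι, |u.1 ⬝ᵥ A *ᵥ u.1| := by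
        rw [← hM]; exact sub_lt_self M hδ0
      have : Nonempty ι := ⟨⟨0, h0adm⟩⟩
      obtain ⟨u, hu⟩ := exists_lt_of_lt_ciSup hlt
      have hFfin : {j | u.1 j ≠ 0}.Finite := Set.toFinite _
      have hFcard : hFfin.toFinset.card ≤ s := by
        rw [← Set.ncard_eq_toFinset_card _ hFfin]
        exact u.2.1
      obtain ⟨S, hFS, hScard⟩ := Finset.exists_superset_card_eq hFcard
        (by simp [hsd])
      obtain ⟨hNcard, hNball, hNcov⟩ := hNSspec S hScard
      have husupp : ∀ j, u.1 j ≠ 0 → j ∈ S := fun j hj =>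
        hFS (hFfin.mem_toFinset.mpr hj)
      obtain ⟨v, hvN, hvdist⟩ := hNcov u.1 husupp u.2.2
      have hv𝒩 : v ∈ 𝒩 := Finset.mem_biUnion.mpr
        ⟨S, Finset.mem_powersetCard.mpr ⟨Finset.subset_univ S, hScard⟩, hvN⟩
      have hvsupp : ∀ j, v j ≠ 0 → j ∈ S := (hNball v hvN).1
      have hvnorm : Real.sqrt (∑ i, v i ^ 2) ≤ 1 := (hNball v hvN).2
      have hQS : ∀ z : Fin d → ℝ, (∀ j, z j ≠ 0 → j ∈ S) →
          Real.sqrt (∑ i, z i ^ 2) ≤ 1 → |z ⬝ᵥ A *ᵥ z| ≤ M := by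
        intro z hz hz1
        have hzadm : {j | z j ≠ 0}.ncard ≤ s := by
          calc {j | z j ≠ 0}.ncard ≤ (S : Set (Fin d)).ncard :=
                Set.ncard_le_ncard (fun j hj => hz j hj) (S : Set (Fin d)).toFinite
            _ = S.card := Set.ncard_coe_finset S
            _ = s := hScard
        exact le_ciSup hbdd (⟨z, hzadm, hz1⟩ : ι)
      have hsubsupp : ∀ j, (u.1 - v) j ≠ 0 → j ∈ S := by
        intro j hj
        by_cases h1 : u.1 j = 0
        · refine hvsupp j fun h2 => hj ?_
          simp [Pi.sub_apply, h1, h2]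
        · exact husupp j h1
      have haddsupp : ∀ j, (u.1 + v) j ≠ 0 → j ∈ S := by
        intro j hj
        by_cases h1 : u.1 j = 0
        · refine hvsupp j fun h2 => hj ?_
          simp [Pi.add_apply, h1, h2]
        · exact husupp j h1
      have hdiff : u.1 ⬝ᵥ A *ᵥ u.1 - v ⬝ᵥ A *ᵥ v = (u.1 - v) ⬝ᵥ A *ᵥ (u.1 + v) := by
        have h1 : (u.1 - v) ⬝ᵥ A *ᵥ (u.1 + v) =
            u.1 ⬝ᵥ A *ᵥ u.1 + u.1 ⬝ᵥ A *ᵥ v - v ⬝ᵥ A *ᵥ u.1 - v ⬝ᵥ A *ᵥ v := by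
          simp [Matrix.mulVec_add, sub_dotProduct, dotProduct_add]
          ring
        rw [h1, stmt12_flip A (hsymm ω) u.1 v]
        ring
      have hb := stmt12_bilin_le A (hsymm ω) S M hM0 hQS (u.1 - v) (u.1 + v)
        hsubsupp haddsupp
      have hsubnorm : Real.sqrt (∑ i, (u.1 - v) i ^ 2) ≤ 1/3 := by
        refine le_trans (le_of_eq ?_) hvdist
        congr 1
      have haddnorm : Real.sqrt (∑ i, (u.1 + v) i ^ 2) ≤ 2 := by
        have := stmt12_tri u.1 v
        have h2 : Real.sqrt (∑ i, (u.1 + v) i ^ 2)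
            = Real.sqrt (∑ i, (u.1 i + v i) ^ 2) := by congr 1
        rw [h2]
        calc Real.sqrt (∑ i, (u.1 i + v i) ^ 2)
            ≤ Real.sqrt (∑ i, u.1 i ^ 2) + Real.sqrt (∑ i, v i ^ 2) := this
          _ ≤ 1 + 1 := add_le_add u.2.2 hvnorm
          _ = 2 := by norm_num
      have hbnd : |u.1 ⬝ᵥ A *ᵥ u.1 - v ⬝ᵥ A *ᵥ v| ≤ M * (2/3) := by
        rw [hdiff]
        calc |(u.1 - v) ⬝ᵥ A *ᵥ (u.1 + v)|
            ≤ M * Real.sqrt (∑ i, (u.1 - v) i ^ 2) * Real.sqrt (∑ i, (u.1 + v) i ^ 2) := hb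
          _ ≤ M * (1/3) * 2 := by
              have h2 := Real.sqrt_nonneg (∑ i, (u.1 + v) i ^ 2)
              have hstep1 : M * Real.sqrt (∑ i, (u.1 - v) i ^ 2)
                    * Real.sqrt (∑ i, (u.1 + v) i ^ 2)
                  ≤ M * (1/3) * Real.sqrt (∑ i, (u.1 + v) i ^ 2) :=
                mul_le_mul_of_nonneg_right
                  (mul_le_mul_of_nonneg_left hsubnorm hM0) h2
              refine hstep1.trans ?_
              have hm13 : (0:ℝ) ≤ M * (1/3) := by positivity
              exact mul_le_mul_of_nonneg_left haddnorm hm13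
          _ = M * (2/3) := by ring
      have habs := abs_sub_abs_le_abs_sub (u.1 ⬝ᵥ A *ᵥ u.1) (v ⬝ᵥ A *ᵥ v)
      refine ⟨v, hv𝒩, ?_⟩
      have h3RM : 3 * R ≤ M := hω
      linarith
    have hne : 𝒩.Nonempty := by
      obtain ⟨v, hv, _⟩ := hδall (R + 1) (by linarith)
      exact ⟨v, hv⟩
    set G := 𝒩.sup' hne fun v => |v ⬝ᵥ A *ᵥ v| with hG
    have hRG : R ≤ G := by
      by_contra hc
      push_neg at hc
      obtain ⟨v, hv, hlt⟩ := hδall (R - G) (by linarith)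
      have hle : |v ⬝ᵥ A *ᵥ v| ≤ G := Finset.le_sup' (fun v => |v ⬝ᵥ A *ᵥ v|) hv
      linarith
    obtain ⟨v, hv, hGv⟩ := Finset.exists_mem_eq_sup' hne fun v => |v ⬝ᵥ A *ᵥ v|
    exact ⟨v, hv, hGv ▸ hRG⟩
  have hincl : {ω | 3 * R ≤ ⨆ u : ι, |u.1 ⬝ᵥ (C ω) *ᵥ u.1|} ⊆
      ⋃ v ∈ 𝒩, {ω | R ≤ |v ⬝ᵥ (C ω) *ᵥ v|} := by
    intro ω hω
    obtain ⟨v, hv, hRv⟩ := hkey ω hω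
    exact Set.mem_biUnion hv hRv
  calc P {ω | 3 * R ≤ ⨆ u : ι, |u.1 ⬝ᵥ (C ω) *ᵥ u.1|}
      ≤ P (⋃ v ∈ 𝒩, {ω | R ≤ |v ⬝ᵥ (C ω) *ᵥ v|}) := measure_mono hincl
    _ ≤ ∑ v ∈ 𝒩, P {ω | R ≤ |v ⬝ᵥ (C ω) *ᵥ v|} :=
        measure_biUnion_finset_le 𝒩 _
    _ ≤ ∑ _v ∈ 𝒩, ENNReal.ofReal p :=
        Finset.sum_le_sum fun v hv => hyp v (h𝒩mem v hv).1 (h𝒩mem v hv).2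
    _ = (𝒩.card : ℝ≥0∞) * ENNReal.ofReal p := by
        rw [Finset.sum_const, nsmul_eq_mul]
    _ = ENNReal.ofReal ((𝒩.card : ℝ) * p) := by
        rw [ENNReal.ofReal_mul (by positivity), ENNReal.ofReal_natCast]
    _ ≤ ENNReal.ofReal (21 ^ s * min ((d : ℝ) ^ s) ((Real.exp 1 * d / s) ^ s) * p) := by
        refine ENNReal.ofReal_le_ofReal ?_
        have hc : (𝒩.card : ℝ) ≤ (d.choose s : ℝ) * 7 ^ s := by
          exact_mod_cast h𝒩card
        have := stmt12_count d s hs hsd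
        calc (𝒩.card : ℝ) * p ≤ ((d.choose s : ℝ) * 7 ^ s) * p :=
              mul_le_mul_of_nonneg_right hc hp
          _ ≤ 21 ^ s * min ((d : ℝ) ^ s) ((Real.exp 1 * d / s) ^ s) * p :=
              mul_le_mul_of_nonneg_right this hp
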